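/- Let $\{r_n\} \subset (0,1)$ be a sequence decreasing monotonically to zero such that $r_n/r_{n+1} - 1 = o(r_n)$. Then for every $p \ge 1$, $\lim_{T\to\infty} \frac{\sum_{n=1}^{T} r_n^p \prod_{s=n+1}^{T}(1-r_s)}{r_T^{p-1}} = 1$. -/

import Mathlib

open Filter Asymptotics


lemma aux_not_summable_inv_succ : ¬ Summable (fun k : ℕ => 1 / ((k : ℝ) + 1)) := by
  intro h
  apply Real.not_summable_one_div_natCast
  refine (summable_nat_add_iff (f := fun n : ℕ => 1 / (n : ℝ)) 1).mp ?_
  convert h using 2 with k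
  push_cast
  rfl
  push_cast
  rfl

lemma aux_not_summable (r : ℕ → ℝ) (hpos : ∀ n, 0 < r n)
    (hmono : ∀ n, r (n + 1) ≤ r n)
    (hrel : (fun n => r n / r (n + 1) - 1) =o[atTop] r) :
    ¬ Summable r := by
  obtain ⟨M, hM⟩ := (hrel.def one_half_pos).exists_forall_of_atTop
  have key : ∀ k, 1 / r (M + k) ≤ 1 / r M + k / 2 := by
    intro k
    induction k with
    | zero => simp
    | succ k ih =>
      have hn := hM (M + k) (by omega)
      have hr1 : 0 < r (M + k) := hpos _
      have hr2 : 0 < r (M + k + 1) := hpos _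
      have hu : r (M + k) / r (M + k + 1) - 1 ≤ (1/2) * r (M + k) := by
        rw [Real.norm_eq_abs, Real.norm_eq_abs, abs_of_pos hr1] at hn
        calc r (M + k) / r (M + k + 1) - 1 ≤ |r (M + k) / r (M + k + 1) - 1| := le_abs_self _
          _ ≤ 1/2 * r (M + k) := hn
      have h2 : 1 / r (M + k + 1) ≤ 1 / r (M + k) + 1 / 2 := by
        have e : 1 / r (M + k + 1) = (r (M + k) / r (M + k + 1)) / r (M + k) := by
          field_simp
        rw [e]
        have h3 : r (M + k) / r (M + k + 1) ≤ 1 + (1/2) * r (M + k) := by linarith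
        calc (r (M + k) / r (M + k + 1)) / r (M + k)
            ≤ (1 + (1/2) * r (M + k)) / r (M + k) := by gcongr
          _ = 1 / r (M + k) + 1 / 2 := by
              rw [add_div, mul_div_assoc, div_self hr1.ne', mul_one]
      have he : M + (k + 1) = M + k + 1 := by omega
      rw [he]
      push_cast
      linarith
  intro hS
  have hS2 : Summable (fun k => r (M + k)) := by
    have := (summable_nat_add_iff M).mpr hS
    simpa [add_comm] using this
  set A := 1 / r M with hA
  have hApos : 0 < A := one_div_pos.mpr (hpos M)
  have hlow : ∀ k : ℕ, (A + 1)⁻¹ * (1 / ((k : ℝ) + 1)) ≤ r (M + k) := by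
    intro k
    have hrk : 0 < r (M + k) := hpos _
    have hk2 : (0:ℝ) < A + (k : ℝ) / 2 := by have := Nat.cast_nonneg (α := ℝ) k; linarith
    have hkey : 1 ≤ (A + (k:ℝ)/2) * r (M + k) := (div_le_iff₀ hrk).mp (key k)
    have h1 : 1 / (A + (k : ℝ) / 2) ≤ r (M + k) := by
      rw [div_le_iff₀ hk2]; nlinarith
    refine le_trans ?_ h1
    have hcmp : A + (k:ℝ)/2 ≤ (A + 1) * ((k:ℝ) + 1) := by nlinarith [Nat.cast_nonneg (α := ℝ) k]
    have h4 := one_div_le_one_div_of_le hk2 hcmp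
    have e : (A+1)⁻¹ * (1/((k:ℝ)+1)) = 1/((A+1)*((k:ℝ)+1)) := by
      field_simp
    rw [e]
    exact h4
  have hsum2 : Summable (fun k : ℕ => (A + 1)⁻¹ * (1 / ((k : ℝ) + 1))) :=
    Summable.of_nonneg_of_le (fun k => by positivity) hlow hS2
  have hfin : Summable (fun k : ℕ => 1 / ((k : ℝ) + 1)) := by
    have h := hsum2.mul_left (A + 1)
    convert h using 2 with k
    rfl
    rw [← mul_assoc, mul_inv_cancel₀ (by linarith), one_mul]
  exact aux_not_summable_inv_succ hfin


lemma aux_rec (r : ℕ → ℝ) (p : ℝ) (T : ℕ) :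
    (∑ n ∈ Finset.Icc 1 (T+1), r n ^ p * ∏ s ∈ Finset.Icc (n+1) (T+1), (1 - r s))
    = (1 - r (T+1)) * (∑ n ∈ Finset.Icc 1 T, r n ^ p * ∏ s ∈ Finset.Icc (n+1) T, (1 - r s))
      + r (T+1) ^ p := by
  rw [Finset.sum_Icc_succ_top (by omega : 1 ≤ T + 1)]
  have h1 : ∏ s ∈ Finset.Icc (T+1+1) (T+1), (1 - r s) = 1 := by
    rw [Finset.Icc_eq_empty (by omega)]; simp
  rw [h1, mul_one, Finset.mul_sum]
  congr 1
  apply Finset.sum_congr rfl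
  intro n hn
  have hn' : n + 1 ≤ T + 1 := by
    simp [Finset.mem_Icc] at hn; omega
  rw [Finset.prod_Icc_succ_top hn']
  ring


lemma aux_exp_sub_one_le (y : ℝ) (hy0 : 0 ≤ y) (hy1 : y ≤ 1/2) :
    Real.exp y - 1 ≤ 2 * y := by
  have h1 : 1 - y ≤ Real.exp (-y) := by
    have := Real.add_one_le_exp (-y); linarith
  have h2 : Real.exp y * (1 - y) ≤ 1 := by
    calc Real.exp y * (1 - y) ≤ Real.exp y * Real.exp (-y) :=
          mul_le_mul_of_nonneg_left h1 (Real.exp_pos y).le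
      _ = 1 := by rw [← Real.exp_add]; simp
  nlinarith [Real.exp_pos y]

section estimate
variable (r : ℕ → ℝ) (f : ℕ → ℝ) (p : ℝ)

lemma aux_step (hpos : ∀ n, 0 < r n) (hlt1 : ∀ n, r n < 1)
    (hmono : ∀ n, r (n + 1) ≤ r n)
    (hrel : (fun n => r n / r (n + 1) - 1) =o[atTop] r)
    (hp : 1 ≤ p)
    (hfrec : ∀ T, f (T+1) = ((1 - r (T+1)) * (r T / r (T+1)) ^ (p-1)) * f T + r (T+1))
    (ε : ℝ) (hε : 0 < ε) (hε2 : ε ≤ 1/2) :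
    ∀ᶠ T in atTop, |f (T+1) - 1| ≤ (1 - r (T+1)/2) * |f T - 1| + (ε/2) * r (T+1) := by
  have hp0 : (0:ℝ) ≤ p - 1 := by linarith
  set c0 : ℝ := ε / (12*(p-1) + 12) with hc0
  have hden : (0:ℝ) < 12*(p-1) + 12 := by linarith
  have hc0pos : 0 < c0 := div_pos hε hden
  have hc0le : c0 ≤ 1 := by
    rw [hc0, div_le_one hden]; linarith
  have hkey : (p-1) * c0 ≤ ε/12 := by
    rw [hc0, ← mul_div_assoc, div_le_div_iff₀ hden (by norm_num)]
    nlinarith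
  filter_upwards [hrel.def hc0pos] with T hT
  have hcpos : 0 < r (T+1) := hpos _
  have hclt : r (T+1) < 1 := hlt1 _
  have hx1 : 1 ≤ r T / r (T+1) := (one_le_div hcpos).mpr (hmono T)
  have hu0 : 0 ≤ r T / r (T+1) - 1 := by linarith
  have hub : r T / r (T+1) - 1 ≤ c0 * r T := by
    rw [Real.norm_eq_abs, Real.norm_eq_abs, abs_of_nonneg hu0, abs_of_pos (hpos T)] at hT
    exact hT
  have hu1 : r T / r (T+1) - 1 ≤ 1 := by
    have h1 : c0 * r T ≤ 1 := by nlinarith [hpos T, hlt1 T]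
    linarith
  have hrTe : r T = (r T / r (T+1)) * r (T+1) := by field_simp
  have hub2 : r T / r (T+1) - 1 ≤ 2 * c0 * r (T+1) := by
    nlinarith [mul_nonneg (mul_nonneg hc0pos.le hcpos.le)
      (by linarith : (0:ℝ) ≤ 1 - (r T / r (T+1) - 1))]
  set x := r T / r (T+1) with hx
  have hxpos : 0 < x := lt_of_lt_of_le one_pos hx1
  have hlog : Real.log x ≤ x - 1 := Real.log_le_sub_one_of_pos hxpos
  have hlog0 : 0 ≤ Real.log x := Real.log_nonneg hx1
  set y := (p-1) * Real.log x with hy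
  have hy0 : 0 ≤ y := mul_nonneg hp0 hlog0
  have hyb : y ≤ (p-1) * (2*c0*r (T+1)) := by
    apply mul_le_mul_of_nonneg_left _ hp0
    calc Real.log x ≤ x - 1 := hlog
      _ ≤ 2*c0*r (T+1) := hub2
  have hy12 : y ≤ 1/2 := by
    have h1 : (p-1) * (2*c0*r (T+1)) ≤ 2*((p-1)*c0) := by
      nlinarith [mul_nonneg hp0 hc0pos.le]
    have h2 : 2*((p-1)*c0) ≤ 2*(ε/12) := by linarith
    linarith
  have hxp : x ^ (p-1) = Real.exp y := by
    rw [Real.rpow_def_of_pos hxpos, hy, mul_comm]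
  have h1le : 1 ≤ x ^ (p-1) := by
    rw [hxp]
    calc (1:ℝ) = Real.exp 0 := by simp
      _ ≤ Real.exp y := Real.exp_le_exp.mpr hy0
  have hxpb : x ^ (p-1) - 1 ≤ (ε/2) * r (T+1) := by
    rw [hxp]
    have h2 := aux_exp_sub_one_le y hy0 hy12
    have h3 : (p-1) * (2*c0*r (T+1)) ≤ 2 * (ε/12) * r (T+1) := by
      nlinarith [hcpos]
    nlinarith
  obtain ⟨X, hXeq⟩ : ∃ X, x ^ (p-1) = X := ⟨_, rfl⟩
  rw [hXeq] at h1le hxpb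
  set q := (1 - r (T+1)) * X with hq
  have hq0 : 0 ≤ q := mul_nonneg (by linarith) (by linarith)
  have hqdown : 1 - r (T+1) ≤ q := by
    calc 1 - r (T+1) = (1 - r (T+1)) * 1 := by ring
      _ ≤ (1 - r (T+1)) * X := mul_le_mul_of_nonneg_left h1le (by linarith)
  have hqup : q ≤ 1 - r (T+1) + (ε/2) * r (T+1) := by
    have h8 : (1 - r (T+1)) * (X - 1) ≤ X - 1 :=
      mul_le_of_le_one_left (by linarith) (by linarith)
    have h9 : q = (1 - r (T+1)) + (1 - r (T+1)) * (X - 1) := by rw [hq]; ring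
    linarith [hxpb]
  have hq2 : q ≤ 1 - r (T+1)/2 := by
    have h10 : (ε/2) * r (T+1) ≤ (1/2) * r (T+1) :=
      mul_le_mul_of_nonneg_right (by linarith) hcpos.le
    linarith
  have heq : f (T+1) - 1 = q * (f T - 1) + (q - 1 + r (T+1)) := by
    rw [hfrec T, ← hx, hXeq]; ring
  have h6 : |q - 1 + r (T+1)| ≤ (ε/2) * r (T+1) := by
    rw [abs_le]
    constructor
    · have h11 : 0 ≤ (ε/2) * r (T+1) := mul_nonneg (by linarith) hcpos.le
      linarith
    · linarith
  calc |f (T+1) - 1| = |q * (f T - 1) + (q - 1 + r (T+1))| := by rw [heq]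
    _ ≤ |q * (f T - 1)| + |q - 1 + r (T+1)| := abs_add_le _ _
    _ = q * |f T - 1| + |q - 1 + r (T+1)| := by rw [abs_mul, abs_of_nonneg hq0]
    _ ≤ (1 - r (T+1)/2) * |f T - 1| + (ε/2) * r (T+1) := by
        have h7 : q * |f T - 1| ≤ (1 - r (T+1)/2) * |f T - 1| :=
          mul_le_mul_of_nonneg_right hq2 (abs_nonneg _)
        linarith
end estimate

/-- Lemma 1 of the paper: if `r n ∈ (0,1)` decreases monotonically to zero and
`r n / r (n+1) - 1 = o(r n)`, then for every `p ≥ 1`,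
`(∑_{n=1}^{T} r_n^p ∏_{s=n+1}^{T} (1 - r_s)) / r_T^{p-1} → 1` as `T → ∞`. -/
theorem stmt0 (r : ℕ → ℝ)
    (hpos : ∀ n, 0 < r n) (hlt1 : ∀ n, r n < 1)
    (hmono : ∀ n, r (n + 1) ≤ r n)
    (hlim : Tendsto r atTop (nhds 0))
    (hrel : (fun n => r n / r (n + 1) - 1) =o[atTop] r)
    (p : ℝ) (hp : 1 ≤ p) :
    Tendsto
      (fun T => (∑ n ∈ Finset.Icc 1 T,
          (r n) ^ p * ∏ s ∈ Finset.Icc (n + 1) T, (1 - r s)) / (r T) ^ (p - 1))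
      atTop (nhds 1) := by
  set f : ℕ → ℝ := fun T => (∑ n ∈ Finset.Icc 1 T,
      (r n) ^ p * ∏ s ∈ Finset.Icc (n + 1) T, (1 - r s)) / (r T) ^ (p - 1) with hf
  -- recursion for f
  have hfrec : ∀ T, f (T+1) = ((1 - r (T+1)) * (r T / r (T+1)) ^ (p-1)) * f T + r (T+1) := by
    intro T
    have hrT := hpos T
    have hrT1 := hpos (T+1)
    have hpow1 : (0:ℝ) < r T ^ (p-1) := Real.rpow_pos_of_pos hrT _
    have hpow2 : (0:ℝ) < r (T+1) ^ (p-1) := Real.rpow_pos_of_pos hrT1 _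
    have hdiv : (r T / r (T+1)) ^ (p-1) = r T ^ (p-1) / r (T+1) ^ (p-1) :=
      Real.div_rpow hrT.le hrT1.le (p-1)
    have hcancel : r (T+1) ^ p / r (T+1) ^ (p-1) = r (T+1) := by
      rw [← Real.rpow_sub hrT1]
      norm_num
    simp only [hf]
    rw [aux_rec r p T, hdiv, add_div, hcancel]
    field_simp
  -- main estimate
  have main : ∀ ε : ℝ, 0 < ε → ε ≤ 1/2 → ∀ᶠ T in atTop, |f T - 1| ≤ 2*ε := by
    intro ε hε hε2
    obtain ⟨N0, hN0⟩ := eventually_atTop.mp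
      (aux_step r f p hpos hlt1 hmono hrel hp hfrec ε hε hε2)
    set g : ℕ → ℝ := fun T => max (|f T - 1| - ε) 0 with hg
    have hg0 : ∀ T, (0:ℝ) ≤ g T := fun T => le_max_right _ _
    have hgmem : ∀ T, |f T - 1| - ε ≤ g T := fun T => le_max_left _ _
    have hgstep : ∀ T, N0 ≤ T → g (T+1) ≤ (1 - r (T+1)/2) * g T := by
      intro T hT
      have hcpos := hpos (T+1)
      have hclt := hlt1 (T+1)
      have hfac : (0:ℝ) ≤ 1 - r (T+1)/2 := by linarith
      apply max_le
      · have h2 := hN0 T hT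
        have h3 : (1 - r (T+1)/2) * |f T - 1| + (ε/2)*r (T+1) - ε
            = (1 - r (T+1)/2) * (|f T - 1| - ε) := by ring
        calc |f (T+1) - 1| - ε ≤ (1 - r (T+1)/2) * (|f T - 1| - ε) := by linarith [h2, h3.le]
          _ ≤ (1 - r (T+1)/2) * g T := mul_le_mul_of_nonneg_left (hgmem T) hfac
      · exact mul_nonneg hfac (hg0 T)
    have hgbound : ∀ k, g (N0 + k) ≤
        g N0 * Real.exp (- ∑ s ∈ Finset.range k, r (N0 + s + 1) / 2) := by
      intro k
      induction k with
      | zero => simp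
      | succ k ih =>
        have h1 := hgstep (N0 + k) (by omega)
        have hexp : 1 - r (N0 + k + 1)/2 ≤ Real.exp (-(r (N0 + k + 1)/2)) := by
          have := Real.add_one_le_exp (-(r (N0 + k + 1)/2)); linarith
        have e : N0 + (k+1) = (N0 + k) + 1 := by omega
        calc g (N0 + (k+1)) = g ((N0 + k) + 1) := by rw [e]
          _ ≤ (1 - r (N0 + k + 1)/2) * g (N0 + k) := h1
          _ ≤ Real.exp (-(r (N0 + k + 1)/2)) * g (N0 + k) :=
              mul_le_mul_of_nonneg_right hexp (hg0 _)
          _ ≤ Real.exp (-(r (N0 + k + 1)/2)) *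
              (g N0 * Real.exp (- ∑ s ∈ Finset.range k, r (N0 + s + 1) / 2)) :=
              mul_le_mul_of_nonneg_left ih (Real.exp_pos _).le
          _ = g N0 * Real.exp (- ∑ s ∈ Finset.range (k+1), r (N0 + s + 1) / 2) := by
              rw [Finset.sum_range_succ, neg_add, Real.exp_add]
              ring
    have hdivg : Tendsto (fun k => ∑ s ∈ Finset.range k, r (N0 + s + 1) / 2) atTop atTop := by
      have hns : ¬ Summable (fun s => r (N0 + s + 1) / 2) := by
        intro h
        have h2 : Summable (fun s => r (N0 + s + 1)) := by
          have h3 := h.mul_left 2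
          convert h3 using 2 with s
          rfl
          ring
        apply aux_not_summable r hpos hmono hrel
        have h4 : Summable (fun s => r (s + (N0 + 1))) := by
          convert h2 using 2 with s
          congr 1
          omega
        exact (summable_nat_add_iff (N0+1)).mp h4
      exact (not_summable_iff_tendsto_nat_atTop_of_nonneg
        (fun s => by have := hpos (N0 + s + 1); linarith)).mp hns
    have hb0 : Tendsto (fun k => g N0 * Real.exp (- ∑ s ∈ Finset.range k, r (N0+s+1)/2))
        atTop (nhds 0) := by
      have h1 : Tendsto (fun k => Real.exp (- ∑ s ∈ Finset.range k, r (N0+s+1)/2))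
          atTop (nhds 0) :=
        Real.tendsto_exp_atBot.comp (tendsto_neg_atTop_atBot.comp hdivg)
      have h2 := h1.const_mul (g N0)
      simpa using h2
    have hgl : Tendsto (fun k => g (N0 + k)) atTop (nhds 0) :=
      squeeze_zero (fun k => hg0 _) hgbound hb0
    have hev : ∀ᶠ k in atTop, g (N0 + k) < ε := by
      have := hgl.eventually (eventually_lt_nhds hε)
      simpa using this
    obtain ⟨K, hK⟩ := eventually_atTop.mp hev
    rw [eventually_atTop]
    refine ⟨N0 + K, fun T hT => ?_⟩
    obtain ⟨k, hk1, rfl⟩ : ∃ k, K ≤ k ∧ T = N0 + k := ⟨T - N0, by omega, by omega⟩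
    have h5 := hK k hk1
    have h6 := hgmem (N0 + k)
    linarith
  -- conclude
  have hzero : Tendsto (fun T => f T - 1) atTop (nhds 0) := by
    rw [NormedAddCommGroup.tendsto_nhds_zero]
    intro ε hε
    have h := main (min (ε/4) (1/2)) (by positivity) (min_le_right _ _)
    filter_upwards [h] with T hT
    rw [Real.norm_eq_abs]
    have h1 : min (ε/4) (1/2) ≤ ε/4 := min_le_left _ _
    calc |f T - 1| ≤ 2 * min (ε/4) (1/2) := hT
      _ ≤ ε/2 := by linarith
      _ < ε := by linarith
  have h7 := hzero.add (tendsto_const_nhds (x := (1:ℝ)))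
  simpa using h7
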